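/- Let ν be a natural number, r > 0, and λ : T_{2π/r} → 𝕋 a continuous map. There exists a one-parameter group (U^{(t)})_{t∈ℝ} of unitary elements of C(T_{2π/r}) ⊗ M_ν(ℂ) with U^{(1)} = M[λ] ⊗ id_ν if and only if the winding number of λ is zero. -/

import Mathlib

open scoped Matrix
section Aux
open Complex

lemma exp_I_arg {z : ℂ} (hz : ‖z‖ = 1) : Complex.exp (Complex.I * z.arg) = z := by
  have h := Complex.norm_mul_exp_arg_mul_I z
  rw [hz] at h; rw [mul_comm]; simpa using h

section lift
variable {γ : ℝ → ℂ} (ε : ℝ)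

-- step increments
noncomputable def aa (γ : ℝ → ℂ) (ε : ℝ) (n : ℤ) : ℝ := (γ ((n+1) * ε) / γ (n * ε)).arg

noncomputable def cc (γ : ℝ → ℂ) (ε : ℝ) (n : ℤ) : ℝ :=
  (γ 0).arg + (∑ j ∈ Finset.range n.toNat, aa γ ε j)
    - ∑ j ∈ Finset.range (-n).toNat, aa γ ε (-(j+1 : ℕ))

lemma cc_succ (γ : ℝ → ℂ) (ε : ℝ) (n : ℤ) : cc γ ε (n+1) = cc γ ε n + aa γ ε n := by
  rcases le_or_gt 0 n with h | h
  · have h1 : (n+1).toNat = n.toNat + 1 := by omega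
    have h2 : (-n).toNat = 0 := by omega
    have h3 : (-(n+1)).toNat = 0 := by omega
    have h4 : (n.toNat : ℤ) = n := Int.toNat_of_nonneg h
    rw [cc, cc, h1, h2, h3, Finset.sum_range_succ, h4]
    simp only [Finset.sum_range_zero]
    ring
  · have h1 : (n+1).toNat = 0 := by omega
    have h2 : n.toNat = 0 := by omega
    set m : ℕ := (-(n+1)).toNat with hm
    have h3 : (-n).toNat = m + 1 := by omega
    have h4 : (-(m+1 : ℕ) : ℤ) = n := by omega
    rw [cc, cc, h1, h2, ← hm, h3, Finset.sum_range_succ, h4]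
    simp only [Finset.sum_range_zero]
    ring

end lift

lemma exp_aa {γ : ℝ → ℂ} (hm : ∀ k, ‖γ k‖ = 1) (ε : ℝ) (n : ℤ) :
    Complex.exp (Complex.I * aa γ ε n) = γ ((n+1) * ε) / γ (n * ε) := by
  apply exp_I_arg
  rw [norm_div, hm, hm, div_one]

lemma exp_cc {γ : ℝ → ℂ} (hm : ∀ k, ‖γ k‖ = 1) (ε : ℝ) (n : ℤ) :
    Complex.exp (Complex.I * cc γ ε n) = γ (n * ε) := by
  have hnz : ∀ k, γ k ≠ 0 := fun k h => by simpa [h] using hm k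
  induction n using Int.induction_on with
  | zero =>
    simp only [cc, Int.toNat_zero, neg_zero, Finset.range_zero, Finset.sum_empty]
    rw [add_zero, sub_zero]
    simpa using exp_I_arg (hm 0)
  | succ i ih =>
    rw [cc_succ, Complex.ofReal_add, mul_add, Complex.exp_add, ih, exp_aa hm]
    rw [mul_div_assoc']
    rw [mul_div_cancel_left₀ _ (hnz _)]
    norm_cast
  | pred i ih =>
    have hstep := cc_succ γ ε (-(i:ℤ) - 1)
    rw [sub_add_cancel] at hstep
    have e1 := exp_aa hm ε (-(i:ℤ) - 1)
    have h1 : ((-(i:ℤ) - 1 : ℤ) : ℝ) + 1 = ((-(i:ℤ) : ℤ) : ℝ) := by push_cast; ring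
    rw [h1] at e1
    have e2 : Complex.exp (Complex.I * cc γ ε (-(i:ℤ))) =
        Complex.exp (Complex.I * cc γ ε (-(i:ℤ)-1)) *
          Complex.exp (Complex.I * aa γ ε (-(i:ℤ)-1)) := by
      rw [hstep, Complex.ofReal_add, mul_add, Complex.exp_add]
    rw [ih, e1] at e2
    have hb : γ ((((-(i:ℤ) - 1 : ℤ)) : ℝ) * ε) ≠ 0 := hnz _
    have ha : γ ((((-(i:ℤ) : ℤ)) : ℝ) * ε) ≠ 0 := hnz _
    have e3 : Complex.exp (Complex.I * cc γ ε (-(i:ℤ)-1)) =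
        γ (((-(i:ℤ) : ℤ) : ℝ) * ε) /
          (γ (((-(i:ℤ) : ℤ) : ℝ) * ε) / γ (((-(i:ℤ) - 1 : ℤ) : ℝ) * ε)) := by
      rw [eq_div_iff (div_ne_zero ha hb)]
      exact e2.symm
    rw [e3]
    field_simp

-- uniform continuity from periodicity
lemma periodic_unif {ℓ : ℝ} (hℓ : 0 < ℓ) {γ : ℝ → ℂ} (hc : Continuous γ)
    (hp : Function.Periodic γ ℓ) :
    ∃ δ > 0, ∀ s t : ℝ, |s - t| < δ → ‖γ s - γ t‖ < 1 := by
  have hK : IsCompact (Set.Icc (0:ℝ) (2*ℓ)) := isCompact_Icc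
  have hUC : UniformContinuousOn γ (Set.Icc 0 (2*ℓ)) :=
    hK.uniformContinuousOn_of_continuous hc.continuousOn
  rw [Metric.uniformContinuousOn_iff] at hUC
  obtain ⟨δ₀, hδ₀, hδ⟩ := hUC 1 one_pos
  refine ⟨min δ₀ ℓ, lt_min hδ₀ hℓ, ?_⟩
  have key : ∀ s t : ℝ, s ≤ t → t - s < min δ₀ ℓ → ‖γ s - γ t‖ < 1 := by
    intro s t hst hd
    set n : ℤ := ⌊s / ℓ⌋ with hn
    have h1 : (n : ℝ) ≤ s / ℓ := Int.floor_le _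
    have h2 : s / ℓ < n + 1 := Int.lt_floor_add_one _
    have hu1 : 0 ≤ s - n * ℓ := by
      have := mul_le_mul_of_nonneg_right h1 hℓ.le
      rw [div_mul_cancel₀ _ (ne_of_gt hℓ)] at this
      linarith
    have hu2 : s - n * ℓ < ℓ := by
      have := mul_lt_mul_of_pos_right h2 hℓ
      rw [div_mul_cancel₀ _ (ne_of_gt hℓ)] at this
      linarith
    have hs' : γ (s - n * ℓ) = γ s := hp.sub_int_mul_eq n
    have ht' : γ (t - n * ℓ) = γ t := hp.sub_int_mul_eq n
    have hmem1 : s - n * ℓ ∈ Set.Icc (0:ℝ) (2*ℓ) := ⟨hu1, by linarith⟩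
    have hmem2 : t - n * ℓ ∈ Set.Icc (0:ℝ) (2*ℓ) := by
      constructor
      · linarith
      · have : t - s < ℓ := lt_of_lt_of_le hd (min_le_right _ _)
        linarith
    have hdist : dist (s - n * ℓ) (t - n * ℓ) < δ₀ := by
      rw [Real.dist_eq]
      have : t - s < δ₀ := lt_of_lt_of_le hd (min_le_left _ _)
      rw [abs_sub_comm, _root_.abs_of_nonneg (by linarith)]
      linarith
    have := hδ _ hmem1 _ hmem2 hdist
    rw [hs', ht', Complex.dist_eq] at this
    exact this
  intro s t hd
  rcases le_total s t with h | h
  · exact key s t h (by rw [abs_sub_comm, _root_.abs_of_nonneg (by linarith)] at hd; linarith)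
  · rw [norm_sub_rev]
    exact key t s h (by rw [_root_.abs_of_nonneg (by linarith)] at hd; linarith)

lemma exists_lift_periodic {ℓ : ℝ} (hℓ : 0 < ℓ) {γ : ℝ → ℂ} (hc : Continuous γ)
    (hm : ∀ k, ‖γ k‖ = 1) (hp : Function.Periodic γ ℓ) :
    ∃ h : ℝ → ℝ, Continuous h ∧ (∀ k, γ k = Complex.exp (Complex.I * h k)) := by
  have hnz : ∀ k, γ k ≠ 0 := fun k h => by simpa [h] using hm k
  obtain ⟨δ, hδpos, hδ⟩ := periodic_unif hℓ hc hp
  set ε := δ / 2 with hε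
  have hεpos : 0 < ε := by positivity
  have hstep : ∀ s t : ℝ, |s - t| ≤ ε → ‖γ s - γ t‖ < 1 := by
    intro s t h
    exact hδ s t (lt_of_le_of_lt h (by linarith))
  -- slit plane membership
  have hq : ∀ (n : ℤ) (t : ℝ), |t - n * ε| ≤ ε → γ t / γ (n * ε) ∈ Complex.slitPlane := by
    intro n t ht
    have h1 : ‖γ t / γ (n * ε) - 1‖ < 1 := by
      rw [div_sub_one (hnz _), norm_div, hm, div_one]
      exact hstep _ _ ht
    rw [Complex.mem_slitPlane_iff]
    left
    have h2 := Complex.abs_re_le_norm (γ t / γ (n * ε) - 1)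
    have h3 : (γ t / γ (n * ε) - 1).re = (γ t / γ (n * ε)).re - 1 := by simp
    have h4 : |(γ t / γ (n * ε)).re - 1| < 1 := lt_of_le_of_lt (h3 ▸ h2) h1
    rw [abs_lt] at h4
    linarith [h4.1]
  -- the lift
  set h : ℝ → ℝ := fun t => cc γ ε ⌊t / ε⌋ + (γ t / γ (⌊t / ε⌋ * ε)).arg with hh
  have hfloor : ∀ t : ℝ, (⌊t / ε⌋ : ℝ) * ε ≤ t ∧ t < ((⌊t / ε⌋ : ℝ) + 1) * ε := by
    intro t
    constructor
    · have := Int.floor_le (t / ε)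
      have := mul_le_mul_of_nonneg_right this hεpos.le
      rwa [div_mul_cancel₀ _ (ne_of_gt hεpos)] at this
    · have := Int.lt_floor_add_one (t / ε)
      have := mul_lt_mul_of_pos_right this hεpos
      rwa [div_mul_cancel₀ _ (ne_of_gt hεpos)] at this
  have hexp : ∀ t, γ t = Complex.exp (Complex.I * h t) := by
    intro t
    rw [hh]
    simp only
    rw [Complex.ofReal_add, mul_add, Complex.exp_add, exp_cc hm]
    rw [exp_I_arg (by rw [norm_div, hm, hm, div_one])]
    rw [mul_div_cancel₀ _ (hnz _)]
  -- piecewise description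
  have heqOn : ∀ n : ℤ, Set.EqOn h
      (fun t => cc γ ε n + (γ t / γ (n * ε)).arg)
      (Set.Icc ((n : ℝ) * ε) (((n : ℝ) + 1) * ε)) := by
    intro n t ht
    rcases lt_or_eq_of_le ht.2 with h2 | h2
    · have hfl : ⌊t / ε⌋ = n := by
        rw [Int.floor_eq_iff]
        constructor
        · rw [le_div_iff₀ hεpos]; exact ht.1
        · rw [div_lt_iff₀ hεpos]; push_cast; exact h2
      simp only [hh, hfl]
    · have hfl : ⌊t / ε⌋ = n + 1 := by
        rw [h2, mul_div_cancel_right₀ _ (ne_of_gt hεpos)]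
        exact_mod_cast Int.floor_intCast (R := ℝ) (n + 1)
      simp only [hh, hfl]
      rw [h2]
      have : γ (((n : ℝ) + 1) * ε) / γ ((((n + 1 : ℤ)) : ℝ) * ε) = 1 := by
        push_cast
        exact div_self (hnz _)
      rw [this, Complex.arg_one, add_zero, cc_succ]
      rfl
  -- continuity on pieces
  have hcont : ∀ n : ℤ, ContinuousOn h (Set.Icc ((n : ℝ) * ε) (((n : ℝ) + 1) * ε)) := by
    intro n
    apply ContinuousOn.congr _ (heqOn n)
    apply ContinuousOn.add continuousOn_const
    intro t ht
    apply ContinuousAt.continuousWithinAt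
    apply (Complex.continuousAt_arg _).comp
    · exact (hc.div_const _).continuousAt
    · apply hq
      rw [abs_le]
      constructor
      · linarith [ht.1]
      · have := ht.2
        nlinarith [ht.2]
  -- locally finite cover
  have hlf : LocallyFinite (fun n : ℤ => Set.Icc ((n : ℝ) * ε) (((n : ℝ) + 1) * ε)) := by
    intro x
    refine ⟨Metric.ball x ε, Metric.ball_mem_nhds x hεpos, ?_⟩
    apply Set.Finite.subset (Set.finite_Icc (⌊x / ε⌋ - 2) (⌊x / ε⌋ + 2))
    rintro n ⟨y, ⟨hy1, hy2⟩, hy3⟩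
    rw [Metric.mem_ball, Real.dist_eq, abs_lt] at hy3
    have hfl1 := Int.floor_le (x / ε)
    have hfl2 := Int.lt_floor_add_one (x / ε)
    have hb1 : ((⌊x / ε⌋ : ℝ) - 2) * ε ≤ x - 2 * ε := by
      have := mul_le_mul_of_nonneg_right hfl1 hεpos.le
      rw [div_mul_cancel₀ _ (ne_of_gt hεpos)] at this
      nlinarith
    have hb2 : x + 2 * ε ≤ ((⌊x / ε⌋ : ℝ) + 3) * ε := by
      have := mul_lt_mul_of_pos_right hfl2 hεpos
      rw [div_mul_cancel₀ _ (ne_of_gt hεpos)] at this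
      nlinarith
    constructor
    · -- ⌊x/ε⌋ - 2 ≤ n
      by_contra hcon
      push_neg at hcon
      have : (n : ℝ) + 1 ≤ (⌊x / ε⌋ : ℝ) - 2 := by
        have : (n : ℤ) + 1 ≤ ⌊x / ε⌋ - 2 := by omega
        exact_mod_cast this
      have : ((n : ℝ) + 1) * ε ≤ ((⌊x / ε⌋ : ℝ) - 2) * ε :=
        mul_le_mul_of_nonneg_right this hεpos.le
      nlinarith
    · by_contra hcon
      push_neg at hcon
      have : (⌊x / ε⌋ : ℝ) + 3 ≤ (n : ℝ) := by
        have : (⌊x / ε⌋ : ℤ) + 3 ≤ n := by omega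
        exact_mod_cast this
      have : ((⌊x / ε⌋ : ℝ) + 3) * ε ≤ (n : ℝ) * ε :=
        mul_le_mul_of_nonneg_right this hεpos.le
      nlinarith
  have hcov : (⋃ n : ℤ, Set.Icc ((n : ℝ) * ε) (((n : ℝ) + 1) * ε)) = Set.univ := by
    rw [Set.eq_univ_iff_forall]
    intro x
    exact Set.mem_iUnion.mpr ⟨⌊x / ε⌋, (hfloor x).1, (hfloor x).2.le⟩
  exact ⟨h, hlf.continuous hcov (fun n => isClosed_Icc) hcont, hexp⟩

lemma norm_exp_I_real (x : ℝ) : ‖Complex.exp (Complex.I * x)‖ = 1 := by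
  rw [Complex.norm_exp]
  simp

-- constancy of continuous functions with values in 2πℤ
lemma const_of_int_values {g : ℝ → ℝ} (hg : Continuous g)
    (hint : ∀ k, ∃ m : ℤ, g k = 2 * Real.pi * m) : ∀ x y, g x = g y := by
  have key : ∀ x y : ℝ, g x < g y → False := by
    intro x y hxy
    obtain ⟨mx, hmx⟩ := hint x
    obtain ⟨my, hmy⟩ := hint y
    have hpi := Real.pi_pos
    have hmlt : mx < my := by
      by_contra hle
      push_neg at hle
      have : (my : ℝ) ≤ mx := by exact_mod_cast hle
      nlinarith
    have h2 : g x + Real.pi ∈ Set.Icc (g x) (g y) := by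
      constructor
      · linarith
      · have : (mx : ℝ) + 1 ≤ my := by exact_mod_cast hmlt
        nlinarith
    obtain ⟨z, hz⟩ := intermediate_value_univ x y hg h2
    obtain ⟨mz, hmz⟩ := hint z
    rw [hmz, hmx] at hz
    have : (2 * mz : ℝ) = 2 * mx + 1 := by
      have h3 : Real.pi * (2 * mz) = Real.pi * (2 * mx + 1) := by linarith
      exact mul_left_cancel₀ (ne_of_gt hpi) h3
    have : (2 * mz : ℤ) = 2 * mx + 1 := by exact_mod_cast this
    omega
  intro x y
  rcases lt_trichotomy (g x) (g y) with h | h | h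
  · exact absurd h (fun h => (key x y h).elim)
  · exact h
  · exact absurd h (fun h => (key y x h).elim)

lemma exists_winding {ℓ : ℝ} (hℓ : 0 < ℓ) {γ : ℝ → ℂ} (hc : Continuous γ)
    (hm : ∀ k, ‖γ k‖ = 1) (hp : Function.Periodic γ ℓ) :
    ∃ (h : ℝ → ℝ) (w : ℤ), Continuous h ∧ (∀ k, γ k = Complex.exp (Complex.I * h k)) ∧
      ∀ k, h (k + ℓ) = h k + 2 * Real.pi * w := by
  obtain ⟨h, hcont, hexp⟩ := exists_lift_periodic hℓ hc hm hp
  have hnz : ∀ k, γ k ≠ 0 := fun k h => by simpa [h] using hm k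
  set q : ℝ → ℝ := fun k => h (k + ℓ) - h k with hq
  have hqc : Continuous q := (hcont.comp (continuous_id.add continuous_const)).sub hcont
  have hint : ∀ k, ∃ m : ℤ, q k = 2 * Real.pi * m := by
    intro k
    have e1 : Complex.exp (Complex.I * (q k : ℝ)) = 1 := by
      have : (Complex.I * ((q k : ℝ) : ℂ)) =
          Complex.I * ((h (k + ℓ) : ℝ) : ℂ) - Complex.I * ((h k : ℝ) : ℂ) := by
        rw [hq]; push_cast; ring
      rw [this, Complex.exp_sub, ← hexp, ← hexp, hp k, div_self (hnz k)]
    rw [Complex.exp_eq_one_iff] at e1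
    obtain ⟨m, hm'⟩ := e1
    refine ⟨m, ?_⟩
    have h2 : ((q k : ℝ) : ℂ) = ((2 * Real.pi * m : ℝ) : ℂ) := by
      apply mul_left_cancel₀ Complex.I_ne_zero
      rw [hm']; push_cast; ring
    exact_mod_cast h2
  have hconst := const_of_int_values hqc hint
  obtain ⟨w, hw⟩ := hint 0
  exact ⟨h, w, hcont, hexp, fun k => by
    have := hconst k 0
    rw [hq] at this hw
    simp only at this hw
    linarith [this, hw]⟩

lemma real_of_exp_eq_one {x : ℝ} (hx : Complex.exp (Complex.I * x) = 1) :
    ∃ m : ℤ, x = 2 * Real.pi * m := by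
  rw [Complex.exp_eq_one_iff] at hx
  obtain ⟨m, hm⟩ := hx
  refine ⟨m, ?_⟩
  have h2 : ((x : ℝ) : ℂ) = ((2 * Real.pi * m : ℝ) : ℂ) := by
    apply mul_left_cancel₀ Complex.I_ne_zero
    rw [hm]; push_cast; ring

  exact_mod_cast h2

end Aux

/-- A continuous function `γ : ℝ → ℂ`, viewed as a unit-circle-valued map on the torus
`ℝ/(ℓℤ)`, has winding number `w` if it has a continuous logarithmic lift `h` with
`h(k + ℓ) = h(k) + 2πw`. -/
def HasWindingNumber (ℓ : ℝ) (γ : ℝ → ℂ) (w : ℤ) : Prop :=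
  ∃ h : ℝ → ℝ, Continuous h ∧ (∀ k, γ k = Complex.exp (Complex.I * h k)) ∧
    ∀ k, h (k + ℓ) = h k + 2 * Real.pi * w

/-- For `ν ≥ 1`, `r > 0` and a continuous map `λ : T_{2π/r} → 𝕋`
(encoded as a `(2π/r)`-periodic continuous unit-modulus function on `ℝ`), there exists a
one-parameter group `(U^{(t)})_{t∈ℝ}` of unitary elements of `C(T_{2π/r}) ⊗ M_ν(ℂ)`
(encoded as periodic continuous `Matrix (Fin ν) (Fin ν) ℂ`-valued functions, pointwise
unitary) with `U^{(1)} = M[λ] ⊗ id_ν`, if and only if the winding number of `λ` is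
zero. -/
theorem one_parameter_group_iff_winding_number_zero
    (ν : ℕ) (hν : 0 < ν) (r : ℝ) (hr : 0 < r)
    (lam : ℝ → ℂ) (hlc : Continuous lam) (hlmod : ∀ k, ‖lam k‖ = 1)
    (hlper : Function.Periodic lam (2 * Real.pi / r)) :
    (∃ U : ℝ → ℝ → Matrix (Fin ν) (Fin ν) ℂ,
        (∀ t : ℝ, Continuous (U t)) ∧
        (∀ t : ℝ, Function.Periodic (U t) (2 * Real.pi / r)) ∧
        (∀ s t : ℝ, ∀ k : ℝ, U (s + t) k = U s k * U t k) ∧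
        (∀ t k : ℝ, U t k * (U t k)ᴴ = 1 ∧ (U t k)ᴴ * U t k = 1) ∧
        (∀ k : ℝ, U 1 k = lam k • 1))
      ↔ HasWindingNumber (2 * Real.pi / r) lam 0 := by
  have hπ := Real.pi_pos
  set ℓ : ℝ := 2 * Real.pi / r with hℓdef
  have hℓ : 0 < ℓ := by positivity
  have hlnz : ∀ k, lam k ≠ 0 := fun k h => by simpa [h] using hlmod k
  constructor
  · rintro ⟨U, hUc, hUper, hUgrp, hUun, hU1⟩
    obtain ⟨h, w, hhc, hhexp, hhw⟩ := exists_winding hℓ hlc hlmod hlper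
    -- U 0 = 1
    have hU0 : ∀ k, U 0 k = 1 := by
      intro k
      have e := hUgrp 0 0 k
      rw [add_zero] at e
      have hu := (hUun 0 k).1
      calc U 0 k = U 0 k * 1 := (mul_one _).symm
        _ = U 0 k * (U 0 k * (U 0 k)ᴴ) := by rw [hu]
        _ = (U 0 k * U 0 k) * (U 0 k)ᴴ := by rw [mul_assoc]
        _ = U 0 k * (U 0 k)ᴴ := by rw [← e]
        _ = 1 := hu
    -- powers
    have hpow : ∀ (j : ℕ) (t k : ℝ), U ((j : ℝ) * t) k = (U t k) ^ j := by
      intro j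
      induction j with
      | zero => intro t k; simpa using hU0 k
      | succ j ih =>
        intro t k
        have : ((j : ℝ) + 1) * t = (j : ℝ) * t + t := by ring
        rw [Nat.cast_add, Nat.cast_one, this, hUgrp, ih, pow_succ]
    -- divisibility
    have hdvd : ∀ n : ℕ, 0 < n → (n : ℤ) ∣ (ν : ℤ) * w := by
      intro n hn
      have hnR : (n : ℝ) ≠ 0 := Nat.cast_ne_zero.mpr hn.ne'
      set δ : ℝ → ℂ := fun k => (U (1 / n) k).det with hδdef
      have hδc : Continuous δ := (hUc _).matrix_det
      have hδm : ∀ k, ‖δ k‖ = 1 := by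
        intro k
        have hu := (hUun (1 / n) k).1
        have e1 : δ k * star (δ k) = 1 := by
          rw [hδdef]
          simp only
          rw [← Matrix.det_conjTranspose, ← Matrix.det_mul, hu, Matrix.det_one]
        rw [Complex.star_def, Complex.mul_conj] at e1
        have e2 : Complex.normSq (δ k) = 1 := by exact_mod_cast e1
        nlinarith [Complex.normSq_eq_norm_sq (δ k), norm_nonneg (δ k)]
      have hδper : Function.Periodic δ ℓ := fun k => congrArg Matrix.det (hUper _ k)
      obtain ⟨ψ, m, hψc, hψexp, hψw⟩ := exists_winding hℓ hδc hδm hδper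
      -- δ^n = lam^ν
      have hdet : ∀ k, δ k ^ n = lam k ^ ν := by
        intro k
        have e1 : U 1 k = (U (1 / n) k) ^ n := by
          have := hpow n (1 / n) k
          rwa [mul_one_div_cancel hnR] at this
        have e2 : (U (1 / n) k).det ^ n = (U 1 k).det := by
          rw [e1, Matrix.det_pow]
        rw [hδdef]
        simp only
        rw [e2, hU1, Matrix.det_smul, Matrix.det_one, Fintype.card_fin, mul_one]
      -- Q := nψ - νh  constant, in 2πℤ
      set Q : ℝ → ℝ := fun k => (n : ℝ) * ψ k - (ν : ℝ) * h k with hQdef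
      have hQc : Continuous Q := (continuous_const.mul hψc).sub (continuous_const.mul hhc)
      have hQint : ∀ k, ∃ m' : ℤ, Q k = 2 * Real.pi * m' := by
        intro k
        apply real_of_exp_eq_one
        have c1 : (Complex.I * ((Q k : ℝ) : ℂ)) =
            (n : ℂ) * (Complex.I * (ψ k : ℝ)) - (ν : ℂ) * (Complex.I * (h k : ℝ)) := by
          rw [hQdef]; push_cast; ring
        rw [c1, Complex.exp_sub, Complex.exp_nat_mul, Complex.exp_nat_mul,
          ← hψexp, ← hhexp, hdet, div_self (pow_ne_zero _ (hlnz k))]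
      have hQconst := const_of_int_values hQc hQint
      have e3 : Q (0 + ℓ) = Q 0 := hQconst _ _
      rw [hQdef] at e3
      simp only at e3
      rw [hψw 0, hhw 0] at e3
      have e4 : 2 * Real.pi * ((n : ℝ) * m) = 2 * Real.pi * ((ν : ℝ) * w) := by ring_nf; nlinarith [e3]
      have e5 : (n : ℝ) * m = (ν : ℝ) * w :=
        mul_left_cancel₀ (by positivity) e4
      have e6 : (n : ℤ) * m = (ν : ℤ) * w := by exact_mod_cast e5
      exact ⟨m, e6.symm⟩
    -- conclude w = 0
    have hw0 : w = 0 := by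
      have hN := hdvd (((ν : ℤ) * w).natAbs + 1) (Nat.succ_pos _)
      by_contra hwne
      have hne : (ν : ℤ) * w ≠ 0 := by
        apply mul_ne_zero _ hwne
        exact_mod_cast hν.ne'
      have habs : (0 : ℤ) < |(ν : ℤ) * w| := abs_pos.mpr hne
      have h1 := Int.le_of_dvd habs ((dvd_abs _ _).mpr hN)
      have h2 : |(ν : ℤ) * w| = (((ν : ℤ) * w).natAbs : ℤ) := Int.abs_eq_natAbs _
      omega
    exact ⟨h, hhc, hhexp, fun k => by rw [hhw k, hw0]⟩
  · rintro ⟨h, hhc, hhexp, hhw⟩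
    have hhper : ∀ k, h (k + ℓ) = h k := by
      intro k; rw [hhw k]; simp
    refine ⟨fun t k => Complex.exp (Complex.I * t * (h k : ℝ)) • 1, ?_, ?_, ?_, ?_, ?_⟩
    · intro t
      exact (Complex.continuous_exp.comp
        (continuous_const.mul (Complex.continuous_ofReal.comp hhc))).smul continuous_const
    · intro t k
      simp only [hhper k]
    · intro s t k
      rw [Matrix.smul_mul, Matrix.one_mul, smul_smul, ← Complex.exp_add]
      congr 2
      push_cast; ring
    · intro t k
      have hstar : star (Complex.exp (Complex.I * t * (h k : ℝ))) =
          Complex.exp (-(Complex.I * t * (h k : ℝ))) := by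
        rw [Complex.star_def, ← Complex.exp_conj]
        congr 1
        simp [Complex.conj_I]
      constructor
      · rw [Matrix.conjTranspose_smul, Matrix.conjTranspose_one, Matrix.smul_mul,
          Matrix.one_mul, smul_smul, hstar, ← Complex.exp_add]
        simp
      · rw [Matrix.conjTranspose_smul, Matrix.conjTranspose_one, Matrix.smul_mul,
          Matrix.one_mul, smul_smul, hstar, ← Complex.exp_add]
        simp
    · intro k
      have e : (Complex.I * ((1:ℝ):ℂ) * ((h k : ℝ) : ℂ)) = Complex.I * ((h k : ℝ) : ℂ) := by
        push_cast; ring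
      simp only
      rw [e, ← hhexp k]
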